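/- For every i ∈ {1,…,M} and every n ≥ 1, the estimated mixture weight α̂_i = N̂_i/n satisfies E|α̂_i − α_i| ≤ φ_n + √(α_i(1−α_i)/n). -/

import Mathlib

open MeasureTheory ProbabilityTheory

lemma aux_l1_le_l2 {Ω : Type*} [MeasurableSpace Ω] (P : Measure Ω) [IsProbabilityMeasure P]
    (Z : Ω → ℝ) (hZ : MemLp Z 2 P) :
    ∫ ω, |Z ω| ∂P ≤ Real.sqrt (∫ ω, (Z ω) ^ 2 ∂P) := by
  have hpq : Real.HolderConjugate 2 2 := Real.HolderConjugate.two_two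
  have hZa : MemLp (fun ω => |Z ω|) (ENNReal.ofReal 2) P := by
    simpa [Real.norm_eq_abs, ENNReal.ofReal_ofNat] using hZ.norm
  have hone : MemLp (fun _ : Ω => (1:ℝ)) (ENNReal.ofReal 2) P := memLp_const 1
  have h := integral_mul_le_Lp_mul_Lq_of_nonneg hpq
    (ae_of_all _ fun ω => abs_nonneg (Z ω)) (ae_of_all _ fun _ => zero_le_one) hZa hone
  simp only [mul_one] at h
  have h1 : ∫ ω, ((1:ℝ)) ^ (2:ℝ) ∂P = 1 := by simp
  have h2 : ∫ ω, |Z ω| ^ (2:ℝ) ∂P = ∫ ω, (Z ω) ^ 2 ∂P := by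
    congr 1; ext ω
    rw [show ((2:ℝ) = ((2:ℕ):ℝ)) by norm_num, Real.rpow_natCast, sq_abs]
  rw [h1, h2] at h
  calc ∫ ω, |Z ω| ∂P ≤ (∫ ω, (Z ω) ^ 2 ∂P) ^ (1/(2:ℝ)) * 1 ^ (1/(2:ℝ)) := h
    _ = Real.sqrt (∫ ω, (Z ω) ^ 2 ∂P) := by
        rw [Real.one_rpow, mul_one, Real.sqrt_eq_rpow]

theorem stmt_1 {Ω : Type*} [MeasurableSpace Ω] (P : Measure Ω) [IsProbabilityMeasure P]
    (n M : ℕ) (hn : 1 ≤ n) (hM : 2 ≤ M)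
    (Y : Fin n → Ω → ℝ) (I : Fin n → Ω → ℕ) (Ihat : Fin n → Ω → ℕ)
    (hYmeas : ∀ k, Measurable (Y k)) (hImeas : ∀ k, Measurable (I k))
    (hIhatmeas : ∀ k, Measurable (Ihat k))
    (hIrange : ∀ k ω, I k ω ∈ Finset.Icc 1 M)
    (hIhatrange : ∀ k ω, Ihat k ω ∈ Finset.Icc 0 M)
    -- the pairs (Y_k, I_k) are i.i.d.
    (hindep : iIndepFun (fun k ω => (Y k ω, I k ω)) P)
    (hident : ∀ k : Fin n,
      Measure.map (fun ω => (Y k ω, I k ω)) P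
        = Measure.map (fun ω => (Y ⟨0, hn⟩ ω, I ⟨0, hn⟩ ω)) P)
    -- mixture weights
    (α : ℕ → ℝ) (hα : ∀ i ∈ Finset.Icc 1 M, α i = (P {ω | I ⟨0, hn⟩ ω = i}).toReal)
    (hαpos : ∀ i ∈ Finset.Icc 1 M, 0 < α i)
    -- counts of predicted labels and estimated weights
    (Nhat : ℕ → Ω → ℕ)
    (hNhat : ∀ i ω, Nhat i ω = (Finset.univ.filter fun k => Ihat k ω = i).card)
    (αhat : ℕ → Ω → ℝ) (hαhat : ∀ i ω, αhat i ω = (Nhat i ω : ℝ) / n)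
    -- maximal misclassification error
    (φ : ℝ)
    (hφ : φ = Finset.univ.sup' ⟨⟨0, hn⟩, Finset.mem_univ _⟩
      (fun k => (P {ω | Ihat k ω ≠ I k ω}).toReal))
    (i : ℕ) (hi : i ∈ Finset.Icc 1 M) :
    (∫ ω, |αhat i ω - α i| ∂P) ≤ φ + Real.sqrt (α i * (1 - α i) / n) := by
  classical
  set k0 : Fin n := ⟨0, hn⟩ with hk0
  have hnpos : (0:ℝ) < n := by exact_mod_cast hn
  -- indicator variables
  set X : Fin n → Ω → ℝ := fun k ω => if I k ω = i then 1 else 0 with hXdef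
  have hXmeas : ∀ k, Measurable (X k) := fun k =>
    Measurable.ite ((hImeas k) (measurableSet_singleton i)) measurable_const measurable_const
  have hXmem : ∀ k, MemLp (X k) 2 P := by
    intro k
    refine MemLp.mono_exponent ?_ le_top
    refine memLp_top_of_bound (hXmeas k).aestronglyMeasurable 1 (ae_of_all _ fun ω => ?_)
    by_cases h : I k ω = i <;> simp [hXdef, h]
  have hXint : ∀ k, Integrable (X k) P := fun k => (hXmem k).integrable one_le_two
  -- common distribution of labels
  have hPIk : ∀ k : Fin n, P {ω | I k ω = i} = P {ω | I k0 ω = i} := by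
    intro k
    have hs : MeasurableSet {p : ℝ × ℕ | p.2 = i} :=
      measurable_snd (measurableSet_singleton i)
    have e1 : {ω | I k ω = i} = (fun ω => (Y k ω, I k ω)) ⁻¹' {p : ℝ × ℕ | p.2 = i} := rfl
    have e2 : {ω | I k0 ω = i} = (fun ω => (Y k0 ω, I k0 ω)) ⁻¹' {p : ℝ × ℕ | p.2 = i} := rfl
    rw [e1, e2, ← Measure.map_apply ((hYmeas k).prodMk (hImeas k)) hs,
      ← Measure.map_apply ((hYmeas k0).prodMk (hImeas k0)) hs, hident k]
  have hEX : ∀ k, ∫ ω, X k ω ∂P = α i := by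
    intro k
    have hind : X k = Set.indicator (I k ⁻¹' {i}) (fun _ => (1:ℝ)) := by
      ext ω
      by_cases h : I k ω = i <;> simp [hXdef, Set.indicator_apply, h]
    have hes : I k ⁻¹' {i} = {ω | I k ω = i} := rfl
    rw [hind, integral_indicator_const _ ((hImeas k) (measurableSet_singleton i)),
      measureReal_def, hes, hPIk k, hα i hi]
    simp
  -- variance of each indicator
  have hVarX : ∀ k, variance (X k) P = α i - (α i) ^ 2 := by
    intro k
    rw [variance_eq_sub (hXmem k)]
    have hsq : ∫ ω, (X k ^ 2) ω ∂P = α i := by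
      rw [show ∫ ω, (X k ^ 2) ω ∂P = ∫ ω, X k ω ∂P from
        integral_congr_ae (ae_of_all _ fun ω => by
          by_cases h : I k ω = i <;> simp [hXdef, h]), hEX k]
    rw [hsq, hEX k]
  -- independence of the indicators
  have hXindep : iIndepFun X P := by
    have hg : ∀ k : Fin n, Measurable fun p : ℝ × ℕ => if p.2 = i then (1:ℝ) else 0 :=
      fun _ => Measurable.ite (measurable_snd (measurableSet_singleton i))
        measurable_const measurable_const
    exact hindep.comp _ hg
  -- the sum and its moments
  set S : Ω → ℝ := fun ω => ∑ k, X k ω with hSdef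
  have hSsum : S = ∑ k, X k := by ext ω; simp [hSdef]
  have hSmem : MemLp S 2 P := by rw [hSsum]; exact memLp_finset_sum' _ fun k _ => hXmem k
  have hES : ∫ ω, S ω ∂P = n * α i := by
    rw [hSdef]
    rw [integral_finset_sum _ fun k _ => hXint k]
    simp [hEX, Finset.sum_const, Finset.card_univ, mul_comm]
  have hVarS : variance S P = n * (α i - (α i) ^ 2) := by
    rw [hSsum, IndepFun.variance_sum (fun k _ => hXmem k)
      (fun k _ l _ hkl => hXindep.indepFun hkl)]
    simp [hVarX, Finset.sum_const, Finset.card_univ, mul_comm]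
    ring
  -- the centered scaled variable
  set Z : Ω → ℝ := fun ω => S ω / n - α i with hZdef
  have hZmem : MemLp Z 2 P := by
    have : Z = fun ω => (n:ℝ)⁻¹ • S ω - α i := by
      ext ω; simp [hZdef, div_eq_inv_mul, smul_eq_mul]
    rw [this]
    exact ((hSmem.const_smul ((n:ℝ)⁻¹)).sub (memLp_const (α i)))
  have hZsq : ∫ ω, (Z ω) ^ 2 ∂P = α i * (1 - α i) / n := by
    have hvar' : variance S P = ∫ x, (S x - n * α i) ^ 2 ∂P := by
      rw [variance_eq_integral hSmem.aemeasurable]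
      refine integral_congr_ae (ae_of_all _ fun x => ?_)
      simp only [Pi.pow_apply, Pi.sub_apply, hES]
    have he : ∀ ω, (Z ω) ^ 2 = (S ω - n * α i) ^ 2 / (n:ℝ)^2 := by
      intro ω
      rw [hZdef]
      field_simp
    rw [integral_congr_ae (ae_of_all _ he), integral_div, ← hvar', hVarS]
    field_simp
  have hZbound : ∫ ω, |Z ω| ∂P ≤ Real.sqrt (α i * (1 - α i) / n) := by
    rw [← hZsq]
    exact aux_l1_le_l2 P Z hZmem
  -- misclassification indicators
  set W : Fin n → Ω → ℝ := fun k ω => if Ihat k ω ≠ I k ω then 1 else 0 with hWdef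
  have hWsetmeas : ∀ k, MeasurableSet {ω | Ihat k ω ≠ I k ω} := by
    intro k
    exact (measurableSet_eq_fun (hIhatmeas k) (hImeas k)).compl
  have hWmeas : ∀ k, Measurable (W k) := fun k =>
    Measurable.ite (hWsetmeas k) measurable_const measurable_const
  have hWint : ∀ k, Integrable (W k) P := by
    intro k
    have hind : W k = Set.indicator {ω | Ihat k ω ≠ I k ω} (fun _ => (1:ℝ)) := by
      ext ω
      by_cases h : Ihat k ω = I k ω <;> simp [hWdef, Set.indicator_apply, Set.mem_setOf_eq, h]
    rw [hind]
    exact (integrable_const (1:ℝ)).indicator (hWsetmeas k)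
  have hEW : ∀ k, ∫ ω, W k ω ∂P ≤ φ := by
    intro k
    have hind : W k = Set.indicator {ω | Ihat k ω ≠ I k ω} (fun _ => (1:ℝ)) := by
      ext ω
      by_cases h : Ihat k ω = I k ω <;> simp [hWdef, Set.indicator_apply, Set.mem_setOf_eq, h]
    rw [hind, integral_indicator_const _ (hWsetmeas k)]
    simp only [smul_eq_mul, mul_one]
    rw [hφ]
    exact Finset.le_sup' (fun k => (P {ω | Ihat k ω ≠ I k ω}).toReal) (Finset.mem_univ k)
  -- pointwise bound
  set D : Ω → ℝ := fun ω => ∑ k, W k ω with hDdef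
  have hDint : Integrable D P := integrable_finset_sum _ fun k _ => hWint k
  have hED : ∫ ω, D ω ∂P ≤ n * φ := by
    rw [hDdef, integral_finset_sum _ fun k _ => hWint k]
    calc (∑ k : Fin n, ∫ ω, W k ω ∂P) ≤ ∑ k : Fin n, φ :=
          Finset.sum_le_sum fun k _ => hEW k
      _ = n * φ := by simp [Finset.sum_const, Finset.card_univ, mul_comm]
  have hpt : ∀ ω, |αhat i ω - α i| ≤ D ω / n + |Z ω| := by
    intro ω
    have hNS : (Nhat i ω : ℝ) = ∑ k : Fin n, (if Ihat k ω = i then (1:ℝ) else 0) := by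
      rw [hNhat, Finset.card_filter]
      push_cast [apply_ite (fun x : ℕ => (x:ℝ))]
      rfl
    have hdiff : |(Nhat i ω : ℝ) - S ω| ≤ D ω := by
      rw [hNS, hSdef, ← Finset.sum_sub_distrib]
      refine (Finset.abs_sum_le_sum_abs _ _).trans (Finset.sum_le_sum fun k _ => ?_)
      by_cases h : Ihat k ω = I k ω
      · simp [hXdef, hWdef, h]
      · have : |(if Ihat k ω = i then (1:ℝ) else 0) - (if I k ω = i then 1 else 0)| ≤ 1 := by
          by_cases h1 : Ihat k ω = i <;> by_cases h2 : I k ω = i <;> simp [h1, h2]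
        simpa [hWdef, h] using this
    have : αhat i ω - α i = ((Nhat i ω : ℝ) - S ω) / n + Z ω := by
      rw [hαhat, hZdef]
      field_simp
      ring
    rw [this]
    calc |((Nhat i ω : ℝ) - S ω) / n + Z ω|
        ≤ |((Nhat i ω : ℝ) - S ω) / n| + |Z ω| := abs_add_le _ _
      _ ≤ D ω / n + |Z ω| := by
          gcongr
          rw [abs_div, abs_of_pos hnpos]
          gcongr
  -- put things together
  have hZint : Integrable (fun ω => |Z ω|) P := (hZmem.integrable one_le_two).abs
  have hRHSint : Integrable (fun ω => D ω / n + |Z ω|) P :=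
    (hDint.div_const _).add hZint
  calc (∫ ω, |αhat i ω - α i| ∂P)
      ≤ ∫ ω, (D ω / n + |Z ω|) ∂P :=
        integral_mono_of_nonneg (ae_of_all _ fun ω => abs_nonneg _) hRHSint
          (ae_of_all _ hpt)
    _ = (∫ ω, D ω ∂P) / n + ∫ ω, |Z ω| ∂P := by
        rw [integral_add (hDint.div_const _) hZint, integral_div]
    _ ≤ φ + Real.sqrt (α i * (1 - α i) / n) :=
        add_le_add (by rw [div_le_iff₀ hnpos, mul_comm]; exact hED) hZbound
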